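/- Every extreme point of the unconstrained LASSO solution set is a solution with minimal support: if x is an extreme point of Sol(y,A), and x' ∈ Sol(y,A) satisfies supp(x') ⊆ supp(x), then x' = x. -/

import Mathlib

open Matrix BigOperators

noncomputable def lassoObj {m N : ℕ} (lam : ℝ) (y : Fin m → ℝ)
    (A : Matrix (Fin m) (Fin N) ℝ) (x : Fin N → ℝ) : ℝ :=
  (∑ i, (A.mulVec x i - y i) ^ 2) + lam * ∑ j, |x j|

def lassoSol {m N : ℕ} (lam : ℝ) (y : Fin m → ℝ)
    (A : Matrix (Fin m) (Fin N) ℝ) : Set (Fin N → ℝ) :=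
  {x | ∀ z, lassoObj lam y A x ≤ lassoObj lam y A z}

/-- Every extreme point of the LASSO solution set is a solution with minimal support. -/
theorem lasso_extreme_point_minimal_support {m N : ℕ} (lam : ℝ) (hlam : 0 < lam)
    (y : Fin m → ℝ) (A : Matrix (Fin m) (Fin N) ℝ)
    (x : Fin N → ℝ) (hx : x ∈ lassoSol lam y A)
    (hext : ∀ p : Fin N → ℝ, x + p ∈ lassoSol lam y A → x - p ∈ lassoSol lam y A → p = 0)
    (x2 : Fin N → ℝ) (hx2 : x2 ∈ lassoSol lam y A)
    (hsupp : Function.support x2 ⊆ Function.support x) :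
    x2 = x := by
  classical
  by_cases hd0 : x2 = x
  · exact hd0
  exfalso
  set d : Fin N → ℝ := x2 - x with hd_def
  have hdne : ∃ j, d j ≠ 0 := by
    by_contra h
    push_neg at h
    apply hd0
    funext j
    have := h j
    simpa [hd_def, sub_eq_zero] using this
  have hzero : ∀ j, x j = 0 → d j = 0 := by
    intro j hj
    have h2 : x2 j = 0 := by
      by_contra h
      exact hsupp h hj
    simp [hd_def, hj, h2]
  have hobj : lassoObj lam y A x = lassoObj lam y A x2 :=
    le_antisymm (hx x2) (hx2 x)
  -- strict convexity of the quadratic part ⇒ equal fitted values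
  have hAv : ∀ i, A.mulVec x2 i = A.mulVec x i := by
    by_contra hc
    push_neg at hc
    obtain ⟨i0, hi0⟩ := hc
    set w : Fin N → ℝ := (2⁻¹ : ℝ) • (x + x2) with hw
    have hAw : ∀ i, A.mulVec w i = (A.mulVec x i + A.mulVec x2 i) / 2 := by
      intro i
      rw [hw, Matrix.mulVec_smul, Matrix.mulVec_add]
      simp [Pi.smul_apply]
      ring
    have hquad : ∑ i, (A.mulVec w i - y i) ^ 2
        = ∑ i, (((A.mulVec x i - y i) ^ 2 + (A.mulVec x2 i - y i) ^ 2) / 2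
            - ((A.mulVec x i - A.mulVec x2 i) / 2) ^ 2) := by
      refine Finset.sum_congr rfl fun i _ => ?_
      rw [hAw i]; ring
    have hl1 : ∑ j, |w j| ≤ ∑ j, (|x j| + |x2 j|) / 2 := by
      refine Finset.sum_le_sum fun j _ => ?_
      have : w j = (x j + x2 j) / 2 := by simp [hw]; ring
      rw [this]
      rw [abs_div]
      have := abs_add_le (x j) (x2 j)
      have h2 : |(2 : ℝ)| = 2 := by norm_num
      rw [h2]
      linarith
    set Q : ℝ := ∑ i, ((A.mulVec x i - A.mulVec x2 i) / 2) ^ 2 with hQ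
    have hQpos : 0 < Q := by
      have hmem : (i0 : Fin m) ∈ Finset.univ := Finset.mem_univ _
      have h1 : 0 < ((A.mulVec x i0 - A.mulVec x2 i0) / 2) ^ 2 := by
        have hne0 : A.mulVec x i0 - A.mulVec x2 i0 ≠ 0 := sub_ne_zero.mpr (Ne.symm hi0)
        positivity
      have h2 : ((A.mulVec x i0 - A.mulVec x2 i0) / 2) ^ 2 ≤ Q := by
        rw [hQ]
        exact Finset.single_le_sum
          (f := fun i => ((A.mulVec x i - A.mulVec x2 i) / 2) ^ 2)
          (fun i _ => by positivity) hmem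
      linarith
    have hwle : lassoObj lam y A w ≤ lassoObj lam y A x - Q := by
      have hq2 : ∑ i, (A.mulVec w i - y i) ^ 2
          = (∑ i, (A.mulVec x i - y i) ^ 2 + ∑ i, (A.mulVec x2 i - y i) ^ 2) / 2 - Q := by
        rw [hquad, Finset.sum_sub_distrib, ← hQ, ← Finset.sum_add_distrib, Finset.sum_div]
      have hsum : ∑ j, (|x j| + |x2 j|) / 2 = (∑ j, |x j| + ∑ j, |x2 j|) / 2 := by
        rw [← Finset.sum_add_distrib, Finset.sum_div]
      have hl1' : ∑ j, |w j| ≤ (∑ j, |x j| + ∑ j, |x2 j|) / 2 := by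
        rw [← hsum]; exact hl1
      have h1 : lam * ∑ j, |w j| ≤ lam * ((∑ j, |x j| + ∑ j, |x2 j|) / 2) :=
        mul_le_mul_of_nonneg_left hl1' hlam.le
      have hobj' := hobj
      unfold lassoObj at hobj' ⊢
      rw [hq2]
      linarith
    have := hx w
    linarith
  have hAd : A.mulVec d = 0 := by
    rw [hd_def, Matrix.mulVec_sub]
    funext i
    simp [hAv i]
  -- choose ε > 0 small enough
  obtain ⟨j0, hj0⟩ := hdne
  have hne : (Finset.univ : Finset (Fin N)).Nonempty := ⟨j0, Finset.mem_univ _⟩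
  set f : Fin N → ℝ := fun j => if d j = 0 then 1 else |x j| / |d j| with hf
  set ε : ℝ := Finset.univ.inf' hne f with hε
  have hfpos : ∀ j, 0 < f j := by
    intro j
    rw [hf]
    by_cases hdj : d j = 0
    · simp [hdj]
    · have hxj : x j ≠ 0 := fun h => hdj (hzero j h)
      simp only [hdj, if_false]
      exact div_pos (abs_pos.mpr hxj) (abs_pos.mpr hdj)
  have hεpos : 0 < ε := by
    rw [hε, Finset.lt_inf'_iff]
    exact fun j _ => hfpos j
  have hεb : ∀ j, ε * |d j| ≤ |x j| := by
    intro j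
    by_cases hdj : d j = 0
    · simp [hdj, abs_nonneg]
    · have h1 : ε ≤ f j := Finset.inf'_le f (Finset.mem_univ j)
      rw [hf] at h1
      simp only [hdj, if_false] at h1
      rw [← le_div_iff₀ (abs_pos.mpr hdj)]
      exact h1
  -- sign vector
  set s : Fin N → ℝ := fun j => if 0 < x j then 1 else -1 with hs
  have key : ∀ j (t : ℝ), |t| ≤ |x j| → |x j + t| = |x j| + s j * t := by
    intro j t ht
    rcases lt_trichotomy (x j) 0 with h | h | h
    · have hsj : s j = -1 := by simp [hs, not_lt.mpr h.le, h.not_gt]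
      have h1 : t ≤ -x j := by
        have := le_abs_self t
        rw [abs_of_neg h] at ht
        linarith
      have h2 : x j + t ≤ 0 := by linarith
      rw [abs_of_nonpos h2, abs_of_neg h, hsj]; ring
    · have ht0 : t = 0 := by
        rw [h] at ht; simpa using ht
      simp [h, ht0]
    · have hsj : s j = 1 := by simp [hs, h]
      have h1 : -x j ≤ t := by
        have := neg_abs_le t
        rw [abs_of_pos h] at ht
        linarith
      have h2 : 0 ≤ x j + t := by linarith
      rw [abs_of_nonneg h2, abs_of_pos h, hsj]; ring
  set S : ℝ := ∑ j, s j * d j with hS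
  have hquad_eq : ∀ (c : ℝ), ∀ i, A.mulVec (x + c • d) i = A.mulVec x i := by
    intro c i
    rw [Matrix.mulVec_add, Matrix.mulVec_smul, hAd]
    simp
  have hεd : ∀ j, |ε * d j| ≤ |x j| := by
    intro j
    rw [abs_mul, abs_of_pos hεpos]
    exact hεb j
  have hplus : lassoObj lam y A (x + ε • d) = lassoObj lam y A x + lam * (ε * S) := by
    unfold lassoObj
    have h1 : ∑ i, (A.mulVec (x + ε • d) i - y i) ^ 2 = ∑ i, (A.mulVec x i - y i) ^ 2 :=
      Finset.sum_congr rfl fun i _ => by rw [hquad_eq ε i]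
    have h2 : ∑ j, |(x + ε • d) j| = ∑ j, |x j| + ε * S := by
      have : ∀ j, |(x + ε • d) j| = |x j| + s j * (ε * d j) := by
        intro j
        have : (x + ε • d) j = x j + ε * d j := by simp
        rw [this, key j (ε * d j) (hεd j)]
      rw [Finset.sum_congr rfl fun j _ => this j, Finset.sum_add_distrib]
      congr 1
      rw [hS, Finset.mul_sum]
      exact Finset.sum_congr rfl fun j _ => by ring
    rw [h1, h2]; ring
  have hminus : lassoObj lam y A (x - ε • d) = lassoObj lam y A x - lam * (ε * S) := by
    unfold lassoObj
    have hrw : x - ε • d = x + (-ε) • d := by funext j; simp; ring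
    rw [hrw]
    have h1 : ∑ i, (A.mulVec (x + (-ε) • d) i - y i) ^ 2 = ∑ i, (A.mulVec x i - y i) ^ 2 :=
      Finset.sum_congr rfl fun i _ => by rw [hquad_eq (-ε) i]
    have h2 : ∑ j, |(x + (-ε) • d) j| = ∑ j, |x j| - ε * S := by
      have hpt : ∀ j, |(x + (-ε) • d) j| = |x j| + s j * (-(ε * d j)) := by
        intro j
        have he : (x + (-ε) • d) j = x j + (-(ε * d j)) := by simp
        have habs : |(-(ε * d j))| ≤ |x j| := by rw [abs_neg]; exact hεd j
        rw [he, key j _ habs]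
      rw [Finset.sum_congr rfl fun j _ => hpt j, Finset.sum_add_distrib]
      have : ∑ j, s j * (-(ε * d j)) = -(ε * S) := by
        rw [hS, Finset.mul_sum, ← Finset.sum_neg_distrib]
        exact Finset.sum_congr rfl fun j _ => by ring
      rw [this]; ring
    rw [h1, h2]; ring
  have hS0 : lam * (ε * S) = 0 := by
    have h1 := hx (x + ε • d)
    have h2 := hx (x - ε • d)
    rw [hplus] at h1
    rw [hminus] at h2
    linarith
  have hmem_plus : x + ε • d ∈ lassoSol lam y A := by
    intro z
    rw [hplus, hS0, add_zero]
    exact hx z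
  have hmem_minus : x - ε • d ∈ lassoSol lam y A := by
    intro z
    rw [hminus, hS0, sub_zero]
    exact hx z
  have hp := hext (ε • d) hmem_plus hmem_minus
  have : d = 0 := by
    rcases smul_eq_zero.mp hp with h | h
    · exact absurd h hεpos.ne'
    · exact h
  exact hj0 (by rw [this]; rfl)
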